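/- Let m be a nonzero integer, let v := 1 + ⌊log₂|m|⌋ and let w := the largest i ∈ ℕ with 2^i ∣ m. Define ℓ := ⌊5(v+3)/4⌋ - w - c, where c = 3 if w = v-1 and v ≡ 1 (mod 4), c = 1 if w = v-1 and v ≡ 3 (mod 4), and c = 0 otherwise. Then there exists a bit string M of length ℓ with π(M) = m; that is, m is representable as an ℓ-bit posit. -/

import Mathlib

/-- Integer value of a bit string read MSB → LSB. -/
def bitsToNat (L : List Bool) : ℕ :=
  L.foldl (fun a b => 2 * a + (if b then 1 else 0)) 0

/-- The posit decoding function `π`. A bit string (MSB → LSB, padded on the right with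
zero "ghost bits" as needed) consists of a sign bit `S`, a run `R` of `k ≥ 1` identical
bits, a terminating bit (the negation of the run bits), two exponent bits and the
fraction bits. The all-zeros string encodes `0` (`some 0`), `10…0` encodes NaR (`none`),
and every other string encodes `((1 - 3S) + f) · 2^e` with regime `r = k - 1` (run of
ones) or `r = -k` (run of zeros), exponent value `ê ∈ {0,1,2,3}`, fraction `f ∈ [0,1)`
and exponent `e = (-1)^S (4r + ê + S)`. -/
def positVal : List Bool → Option ℚ
  | [] => some 0
  | S :: rest =>
    if rest.all (fun b => b == false) then
      if S then none else some 0
    else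
      let b0 : Bool := rest.getD 0 false
      let k : ℕ := (rest.takeWhile (fun b => b == b0)).length
      let r : ℤ := if b0 then (k : ℤ) - 1 else -(k : ℤ)
      let ehat : ℤ := 2 * (if rest.getD (k + 1) false then 1 else 0) +
        (if rest.getD (k + 2) false then 1 else 0)
      let F : List Bool := rest.drop (k + 3)
      let f : ℚ := (bitsToNat F : ℚ) / 2 ^ F.length
      let s : ℤ := if S then 1 else 0
      let e : ℤ := (if S then -1 else 1) * (4 * r + ehat + s)
      some (((1 - 3 * (s : ℚ)) + f) * 2 ^ e)

def natToBits : ℕ → ℕ → List Bool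
  | 0, _ => []
  | p+1, n => natToBits p (n / 2) ++ [decide (n % 2 = 1)]

lemma natToBits_length (p n : ℕ) : (natToBits p n).length = p := by
  induction p generalizing n with
  | zero => rfl
  | succ p ih => simp [natToBits, ih]

lemma bitsToNat_concat (L : List Bool) (b : Bool) :
    bitsToNat (L ++ [b]) = 2 * bitsToNat L + (if b then 1 else 0) := by
  simp [bitsToNat]

lemma bitsToNat_natToBits (p n : ℕ) : bitsToNat (natToBits p n) = n % 2 ^ p := by
  induction p generalizing n with
  | zero => simp [natToBits, bitsToNat, Nat.mod_one]
  | succ p ih =>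
    rw [natToBits, bitsToNat_concat, ih, pow_succ, mul_comm (2^p) 2, Nat.mod_mul]
    simp only [decide_eq_true_eq]
    split <;> omega

lemma takeWhile_replicate_append (b : Bool) (k : ℕ) (tail : List Bool)
    (h : ∀ c l, tail = c :: l → c = !b) :
    (List.replicate k b ++ tail).takeWhile (fun x => x == b) = List.replicate k b := by
  induction k with
  | zero =>
    cases tail with
    | nil => simp
    | cons c l =>
      have := h c l rfl; subst this
      simp [List.takeWhile_cons]
  | succ k ih => simp [List.replicate_succ, List.takeWhile_cons, ih]

lemma positVal_eval (S b : Bool) (k : ℕ) (tail : List Bool)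
    (hk : 1 ≤ k)
    (hne : b = true ∨ tail ≠ [])
    (hhead : ∀ c l, tail = c :: l → c = !b) :
    positVal (S :: (List.replicate k b ++ tail)) =
      some (((1 - 3 * (if S then (1:ℚ) else 0)) +
        (bitsToNat (tail.drop 3) : ℚ) / 2 ^ (tail.drop 3).length) *
        2 ^ ((if S then (-1:ℤ) else 1) *
          (4 * (if b then (k:ℤ) - 1 else -(k:ℤ)) +
           (2 * (if tail.getD 1 false then (1:ℤ) else 0) +
             (if tail.getD 2 false then (1:ℤ) else 0)) +
           (if S then (1:ℤ) else 0)))) := by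
  have hall : (List.replicate k b ++ tail).all (fun x => x == false) = false := by
    obtain ⟨k, rfl⟩ := Nat.exists_eq_succ_of_ne_zero (by omega : k ≠ 0)
    cases b
    · rcases hne with h | hne
      · cases h
      cases tail with
      | nil => exact absurd rfl hne
      | cons c l =>
        have := hhead c l rfl; subst this
        simp [List.all_append]
    · simp [List.replicate_succ]
  have hb0 : (List.replicate k b ++ tail).getD 0 false = b := by
    obtain ⟨k, rfl⟩ := Nat.exists_eq_succ_of_ne_zero (by omega : k ≠ 0)
    simp [List.replicate_succ]
  have htw : (List.takeWhile (fun x => x == b) (List.replicate k b ++ tail)).length = k := by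
    rw [takeWhile_replicate_append b k tail hhead, List.length_replicate]
  have hg1 : (List.replicate k b ++ tail).getD (k + 1) false = tail.getD 1 false := by
    rw [List.getD_append_right] <;> simp
  have hg2 : (List.replicate k b ++ tail).getD (k + 2) false = tail.getD 2 false := by
    rw [List.getD_append_right] <;> simp
  have hdrop : (List.replicate k b ++ tail).drop (k + 3) = tail.drop 3 := by
    have := List.drop_append (l₁ := List.replicate k b) (l₂ := tail) (i := k + 3)
    simpa using this
  rw [positVal]
  rw [if_neg (show ¬_ from by rw [hall]; simp)]
  simp only [hb0]
  simp only [htw, hg1, hg2, hdrop]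
  cases S <;> simp
/-- **Posit integer representation (existence).**
Let `m ≠ 0`, `v = 1 + ⌊log₂ |m|⌋`, `w` the largest `i` with `2^i ∣ m`, and
`ℓ = ⌊5(v+3)/4⌋ - w - c` with `c = 3` if `w = v-1` and `v ≡ 1 [MOD 4]`,
`c = 1` if `w = v-1` and `v ≡ 3 [MOD 4]`, and `c = 0` otherwise.
Then `m` is representable as an `ℓ`-bit posit. -/
theorem posit_integer_representation (m : ℤ) (hm : m ≠ 0)
    (v w ℓ : ℕ)
    (hv : v = 1 + Nat.log 2 m.natAbs)
    (hw1 : (2 : ℤ) ^ w ∣ m) (hw2 : ∀ i : ℕ, (2 : ℤ) ^ i ∣ m → i ≤ w)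
    (hℓ : ℓ = 5 * (v + 3) / 4 - w -
      (if w = v - 1 ∧ v % 4 = 1 then 3
       else if w = v - 1 ∧ v % 4 = 3 then 1
       else 0)) :
    ∃ M : List Bool, M.length = ℓ ∧ positVal M = some (m : ℚ) := by
  have hN0 : 0 < m.natAbs := Int.natAbs_pos.mpr hm
  set N := m.natAbs with hNdef
  have hvpos : 1 ≤ v := by omega
  have hv1 : 2 ^ (v - 1) ≤ N := by
    have h := Nat.pow_log_le_self 2 hN0.ne'
    have : v - 1 = Nat.log 2 N := by omega
    rwa [this]
  have hv2 : N < 2 ^ v := by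
    calc N < 2 ^ (Nat.log 2 N + 1) := Nat.lt_pow_succ_log_self (by norm_num) N
    _ = 2 ^ v := by congr 1; omega
  have hwN : 2 ^ w ∣ N := by
    have := Int.natAbs_dvd_natAbs.mpr hw1
    simpa [Int.natAbs_pow] using this
  have hw2N : ¬ 2 ^ (w + 1) ∣ N := by
    intro h
    have h2 : ((2:ℤ)) ^ (w+1) ∣ m := Int.natAbs_dvd_natAbs.mp (by simpa [Int.natAbs_pow] using h)
    have := hw2 (w+1) h2
    omega
  have hwlt : w < v := by
    by_contra h
    push_neg at h
    have h1 := Nat.le_of_dvd hN0 hwN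
    have h2 : (2:ℕ) ^ v ≤ 2 ^ w := Nat.pow_le_pow_right (by norm_num) h
    omega
  rcases hm.lt_or_gt with hneg | hpos
  · -- negative case
    have hm' : (m : ℚ) = -(N : ℚ) := by
      have h1 : (N : ℤ) = -m := by rw [hNdef]; omega
      have : m = -(N : ℤ) := by omega
      rw [this]; push_cast; ring
    by_cases hwv1 : w = v - 1
    · -- m = -2^(v-1)
      have hNpow : N = 2 ^ (v - 1) := by
        obtain ⟨c, hc⟩ := hwN
        rw [hwv1] at hc
        have hc1 : 1 ≤ c := by
          rcases Nat.eq_zero_or_pos c with rfl | h; · omega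
          · exact h
        have hvv : (2:ℕ) ^ v = 2 ^ (v-1) * 2 := by
          rw [← pow_succ]; congr 1; omega
        have hc2 : c < 2 := by
          by_contra h
          push_neg at h
          have := Nat.mul_le_mul_left (2 ^ (v-1)) h
          omega
        interval_cases c
        omega
      rcases eq_or_lt_of_le hvpos with hv1' | hv2'
      · -- v = 1, m = -1
        have hvone : v = 1 := hv1'.symm
        have hNone : N = 1 := by rw [hNpow, hvone]; norm_num
        have hwzero : w = 0 := by omega
        refine ⟨true :: (List.replicate 1 true ++ []), ?_, ?_⟩
        · simp only [List.length_cons, List.length_append, List.length_replicate,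
            List.length_nil]
          rw [hℓ, hvone, hwzero]
          norm_num
        · rw [positVal_eval true true 1 [] le_rfl (Or.inl rfl) (by intro c l h; cases h)]
          refine congrArg some ?_
          rw [hm', hNone]
          norm_num [bitsToNat]
      · -- v ≥ 2
        set k := (v + 2) / 4 with hkdef
        have hk1 : 1 ≤ k := by omega
        set eh := 3 - (v + 2) % 4 with hehdef
        have hehv : 4 * k = (v - 1) + eh := by omega
        have h4 : v % 4 = 1 ∨ v % 4 = 2 ∨ v % 4 = 3 ∨ v % 4 = 0 := by omega
        -- helper to finish the value goal
        have hfin : ∀ tail : List Bool, tail ≠ [] → tail.drop 3 = [] →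
            (2 * (if tail.getD 1 false then (1:ℤ) else 0) +
              (if tail.getD 2 false then (1:ℤ) else 0)) = (eh : ℤ) →
            (∀ c l, tail = c :: l → c = !false) →
            positVal (true :: (List.replicate k false ++ tail)) = some ((m : ℚ)) := by
          intro tail htne hd3 heht hhd
          rw [positVal_eval true false k tail hk1 (Or.inr htne) hhd]
          refine congrArg some ?_
          rw [hd3, hm', hNpow]
          have he : (if (true:Bool) then (-1:ℤ) else 1) *
              (4 * (if (false:Bool) then (k:ℤ) - 1 else -(k:ℤ)) +
                (2 * (if tail.getD 1 false then (1:ℤ) else 0) +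
                  (if tail.getD 2 false then (1:ℤ) else 0)) +
                (if (true:Bool) then (1:ℤ) else 0)) = ((v - 2 : ℕ) : ℤ) := by
            rw [heht]
            simp only [Bool.false_eq_true, Bool.true_eq_false, reduceIte]
            omega
          rw [he, zpow_natCast]
          have hp : (2:ℚ) ^ (v - 1) = 2 * 2 ^ (v - 2) := by
            have h12 : v - 1 = (v - 2) + 1 := by omega
            rw [h12, pow_succ']
          push_cast [hp]
          norm_num [bitsToNat]
        rcases h4 with h4 | h4 | h4 | h4
        · -- eh = 0, tail = [true]
          refine ⟨true :: (List.replicate k false ++ [true]), ?_, hfin [true] (by simp) rfl (by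
              simp [List.getD]; omega) (by intro c l h; cases h; rfl)⟩
          simp only [List.length_cons, List.length_append, List.length_replicate, List.length_nil]
          rw [hℓ, if_pos ⟨hwv1, h4⟩]
          omega
        · -- eh = 3, tail = [true, true, true]
          refine ⟨true :: (List.replicate k false ++ [true, true, true]), ?_, hfin _ (by simp) rfl (by
              simp [List.getD]; omega) (by intro c l h; cases h; rfl)⟩
          simp only [List.length_cons, List.length_append, List.length_replicate, List.length_nil]
          rw [hℓ, if_neg (by simp [h4]), if_neg (by simp [h4])]
          omega
        · -- eh = 2, tail = [true, true]
          refine ⟨true :: (List.replicate k false ++ [true, true]), ?_, hfin _ (by simp) rfl (by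
              simp [List.getD]; omega) (by intro c l h; cases h; rfl)⟩
          simp only [List.length_cons, List.length_append, List.length_replicate, List.length_nil]
          rw [hℓ, if_neg (by simp [h4]), if_pos ⟨hwv1, h4⟩]
          omega
        · -- eh = 1, tail = [true, false, true]
          refine ⟨true :: (List.replicate k false ++ [true, false, true]), ?_, hfin _ (by simp) rfl (by
              simp [List.getD]; omega) (by intro c l h; cases h; rfl)⟩
          simp only [List.length_cons, List.length_append, List.length_replicate, List.length_nil]
          rw [hℓ, if_neg (by simp [h4]), if_neg (by simp [h4])]
          omega
    · -- negative general case: w < v - 1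
      have hwv : w < v - 1 := by omega
      have hNne : N ≠ 2 ^ (v - 1) := by
        intro h
        have hdvd : ((2:ℤ)) ^ (v-1) ∣ m := by
          refine Int.natAbs_dvd_natAbs.mp ?_
          simp only [Int.natAbs_pow, Int.natAbs_natCast]
          rw [← hNdef, h]
          norm_num
        have := hw2 (v-1) hdvd
        omega
      set k := (v + 3) / 4 with hkdef
      have hk1 : 1 ≤ k := by omega
      set eh := 3 - (v + 3) % 4 with hehdef
      have hehv : 4 * k = v + eh := by omega
      set M' := (2 ^ v - N) / 2 ^ w with hM'def
      have hdvd2 : 2 ^ w ∣ 2 ^ v - N := Nat.dvd_sub (pow_dvd_pow 2 (by omega)) hwN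
      have hM'eq : 2 ^ w * M' = 2 ^ v - N := Nat.mul_div_cancel' hdvd2
      have hps : (2:ℕ) ^ (v - 1) = 2 ^ w * 2 ^ (v - 1 - w) := by
        rw [← pow_add]; congr 1; omega
      have hvv : (2:ℕ) ^ v = 2 ^ (v-1) * 2 := by
        rw [← pow_succ]; congr 1; omega
      have hM'lt : M' < 2 ^ (v - 1 - w) := by
        have hlt : 2 ^ w * M' < 2 ^ w * 2 ^ (v - 1 - w) := by
          rw [hM'eq, ← hps]; omega
        exact Nat.lt_of_mul_lt_mul_left hlt
      set F := natToBits (v - 1 - w) M' with hFdef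
      have hFlen : F.length = v - 1 - w := natToBits_length _ _
      have hFval : bitsToNat F = M' := by
        rw [hFdef, bitsToNat_natToBits, Nat.mod_eq_of_lt hM'lt]
      set tail : List Bool := true :: decide (2 ≤ eh) :: decide (eh % 2 = 1) :: F with htail
      refine ⟨true :: (List.replicate k false ++ tail), ?_, ?_⟩
      · simp only [htail, List.length_cons, List.length_append, List.length_replicate, List.length_nil, hFlen]
        rw [hℓ, if_neg (by simp [hwv1]), if_neg (by simp [hwv1])]
        omega
      · rw [positVal_eval true false k tail hk1 (Or.inr (by simp [htail]))
          (by intro c l h; rw [htail] at h; cases h; rfl)]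
        refine congrArg some ?_
        have hgd1 : tail.getD 1 false = decide (2 ≤ eh) := rfl
        have hgd2 : tail.getD 2 false = decide (eh % 2 = 1) := rfl
        have hdr : tail.drop 3 = F := rfl
        rw [hgd1, hgd2, hdr, hm', hFval, hFlen]
        have heh4 : eh < 4 := by omega
        have heht : (2 * (if decide (2 ≤ eh) then (1:ℤ) else 0) +
            (if decide (eh % 2 = 1) then (1:ℤ) else 0)) = (eh : ℤ) := by
          interval_cases eh <;> simp
        have he : (if (true:Bool) then (-1:ℤ) else 1) *
            (4 * (if (false:Bool) then (k:ℤ) - 1 else -(k:ℤ)) +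
              (2 * (if decide (2 ≤ eh) then (1:ℤ) else 0) +
                (if decide (eh % 2 = 1) then (1:ℤ) else 0)) +
              (if (true:Bool) then (1:ℤ) else 0)) = ((v - 1 : ℕ) : ℤ) := by
          rw [heht]
          simp only [Bool.false_eq_true, Bool.true_eq_false, reduceIte]
          omega
        rw [he, zpow_natCast]
        -- goal : (1 - 3*1 + M'/2^(v-1-w)) * 2^(v-1) = -N
        have hNval : (N:ℚ) = 2 * 2 ^ (v-1) - 2 ^ w * M' := by
          have h1 : (2:ℕ) ^ w * M' = 2 ^ v - N := hM'eq
          have h2 : N + 2 ^ w * M' = 2 ^ (v-1) * 2 := by omega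
          have := congrArg (fun x : ℕ => (x : ℚ)) h2
          push_cast at this
          linarith
        rw [hNval]
        have hps' : (2:ℚ) ^ (v - 1) = 2 ^ w * 2 ^ (v - 1 - w) := by
          rw [← pow_add]; congr 1; omega
        have h2p : (0:ℚ) < 2 ^ (v-1-w) := by positivity
        field_simp
        rw [hps']
        simp only [Bool.false_eq_true, ↓reduceIte]
        ring
  · -- positive case
    have hm' : (m : ℚ) = (N : ℚ) := by
      have h1 : (N : ℤ) = m := by rw [hNdef]; omega
      exact_mod_cast h1.symm
    by_cases hwv1 : w = v - 1
    · -- m = 2^(v-1)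
      have hNpow : N = 2 ^ (v - 1) := by
        obtain ⟨c, hc⟩ := hwN
        rw [hwv1] at hc
        have hc1 : 1 ≤ c := by
          rcases Nat.eq_zero_or_pos c with rfl | h; · omega
          · exact h
        have hvv : (2:ℕ) ^ v = 2 ^ (v-1) * 2 := by
          rw [← pow_succ]; congr 1; omega
        have hc2 : c < 2 := by
          by_contra h
          push_neg at h
          have := Nat.mul_le_mul_left (2 ^ (v-1)) h
          omega
        interval_cases c
        omega
      set k := (v + 3) / 4 with hkdef
      have hk1 : 1 ≤ k := by omega
      set eh := (v + 3) % 4 with hehdef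
      have hehv : v + 3 = 4 * k + eh := by omega
      have h4 : v % 4 = 1 ∨ v % 4 = 2 ∨ v % 4 = 3 ∨ v % 4 = 0 := by omega
      have hfin : ∀ tail : List Bool, tail.drop 3 = [] →
          (2 * (if tail.getD 1 false then (1:ℤ) else 0) +
            (if tail.getD 2 false then (1:ℤ) else 0)) = (eh : ℤ) →
          (∀ c l, tail = c :: l → c = !true) →
          positVal (false :: (List.replicate k true ++ tail)) = some ((m : ℚ)) := by
        intro tail hd3 heht hhd
        rw [positVal_eval false true k tail hk1 (Or.inl rfl) hhd]
        refine congrArg some ?_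
        rw [hd3, hm', hNpow]
        have he : (if (false:Bool) then (-1:ℤ) else 1) *
            (4 * (if (true:Bool) then (k:ℤ) - 1 else -(k:ℤ)) +
              (2 * (if tail.getD 1 false then (1:ℤ) else 0) +
                (if tail.getD 2 false then (1:ℤ) else 0)) +
              (if (false:Bool) then (1:ℤ) else 0)) = ((v - 1 : ℕ) : ℤ) := by
          rw [heht]
          simp only [Bool.false_eq_true, Bool.true_eq_false, reduceIte]
          omega
        rw [he, zpow_natCast]
        push_cast
        norm_num [bitsToNat]
      rcases h4 with h4 | h4 | h4 | h4
      · -- eh = 0, tail = []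
        refine ⟨false :: (List.replicate k true ++ []), ?_, hfin [] rfl (by
            simp [List.getD]; omega) (by intro c l h; cases h)⟩
        simp only [List.length_cons, List.length_append, List.length_replicate, List.length_nil]
        rw [hℓ, if_pos ⟨hwv1, h4⟩]
        omega
      · -- eh = 1, tail = [false, false, true]
        refine ⟨false :: (List.replicate k true ++ [false, false, true]), ?_, hfin _ rfl (by
            simp [List.getD]; omega) (by intro c l h; cases h; rfl)⟩
        simp only [List.length_cons, List.length_append, List.length_replicate, List.length_nil]
        rw [hℓ, if_neg (by simp [h4]), if_neg (by simp [h4])]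
        omega
      · -- eh = 2, tail = [false, true]
        refine ⟨false :: (List.replicate k true ++ [false, true]), ?_, hfin _ rfl (by
            simp [List.getD]; omega) (by intro c l h; cases h; rfl)⟩
        simp only [List.length_cons, List.length_append, List.length_replicate, List.length_nil]
        rw [hℓ, if_neg (by simp [h4]), if_pos ⟨hwv1, h4⟩]
        omega
      · -- eh = 3, tail = [false, true, true]
        refine ⟨false :: (List.replicate k true ++ [false, true, true]), ?_, hfin _ rfl (by
            simp [List.getD]; omega) (by intro c l h; cases h; rfl)⟩
        simp only [List.length_cons, List.length_append, List.length_replicate, List.length_nil]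
        rw [hℓ, if_neg (by simp [h4]), if_neg (by simp [h4])]
        omega
    · -- positive general case: w < v - 1
      have hwv : w < v - 1 := by omega
      set k := (v + 3) / 4 with hkdef
      have hk1 : 1 ≤ k := by omega
      set eh := (v + 3) % 4 with hehdef
      have hehv : v + 3 = 4 * k + eh := by omega
      set M' := (N - 2 ^ (v-1)) / 2 ^ w with hM'def
      have hdvd2 : 2 ^ w ∣ N - 2 ^ (v-1) := Nat.dvd_sub hwN (pow_dvd_pow 2 (by omega))
      have hM'eq : 2 ^ w * M' = N - 2 ^ (v-1) := Nat.mul_div_cancel' hdvd2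
      have hps : (2:ℕ) ^ (v - 1) = 2 ^ w * 2 ^ (v - 1 - w) := by
        rw [← pow_add]; congr 1; omega
      have hvv : (2:ℕ) ^ v = 2 ^ (v-1) * 2 := by
        rw [← pow_succ]; congr 1; omega
      have hM'lt : M' < 2 ^ (v - 1 - w) := by
        have hlt : 2 ^ w * M' < 2 ^ w * 2 ^ (v - 1 - w) := by
          rw [hM'eq, ← hps]; omega
        exact Nat.lt_of_mul_lt_mul_left hlt
      set F := natToBits (v - 1 - w) M' with hFdef
      have hFlen : F.length = v - 1 - w := natToBits_length _ _
      have hFval : bitsToNat F = M' := by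
        rw [hFdef, bitsToNat_natToBits, Nat.mod_eq_of_lt hM'lt]
      set tail : List Bool := false :: decide (2 ≤ eh) :: decide (eh % 2 = 1) :: F with htail
      refine ⟨false :: (List.replicate k true ++ tail), ?_, ?_⟩
      · simp only [htail, List.length_cons, List.length_append, List.length_replicate, List.length_nil, hFlen]
        rw [hℓ, if_neg (by simp [hwv1]), if_neg (by simp [hwv1])]
        omega
      · rw [positVal_eval false true k tail hk1 (Or.inl rfl)
          (by intro c l h; rw [htail] at h; cases h; rfl)]
        refine congrArg some ?_
        have hgd1 : tail.getD 1 false = decide (2 ≤ eh) := rfl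
        have hgd2 : tail.getD 2 false = decide (eh % 2 = 1) := rfl
        have hdr : tail.drop 3 = F := rfl
        rw [hgd1, hgd2, hdr, hm', hFval, hFlen]
        have heh4 : eh < 4 := by omega
        have heht : (2 * (if decide (2 ≤ eh) then (1:ℤ) else 0) +
            (if decide (eh % 2 = 1) then (1:ℤ) else 0)) = (eh : ℤ) := by
          interval_cases eh <;> simp
        have he : (if (false:Bool) then (-1:ℤ) else 1) *
            (4 * (if (true:Bool) then (k:ℤ) - 1 else -(k:ℤ)) +
              (2 * (if decide (2 ≤ eh) then (1:ℤ) else 0) +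
                (if decide (eh % 2 = 1) then (1:ℤ) else 0)) +
              (if (false:Bool) then (1:ℤ) else 0)) = ((v - 1 : ℕ) : ℤ) := by
          rw [heht]
          simp only [Bool.false_eq_true, Bool.true_eq_false, reduceIte]
          omega
        rw [he, zpow_natCast]
        have hNval : (N:ℚ) = 2 ^ (v-1) + 2 ^ w * M' := by
          have h2 : N = 2 ^ (v-1) + 2 ^ w * M' := by omega
          have := congrArg (fun x : ℕ => (x : ℚ)) h2
          push_cast at this
          linarith
        rw [hNval]
        have hps' : (2:ℚ) ^ (v - 1) = 2 ^ w * 2 ^ (v - 1 - w) := by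
          rw [← pow_add]; congr 1; omega
        have h2p : (0:ℚ) < 2 ^ (v-1-w) := by positivity
        field_simp
        rw [hps']
        simp only [Bool.false_eq_true, ↓reduceIte]
        ring
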